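/- Let f : [−l/2, l/2] → ℝ be continuously differentiable, λ ∈ ℝ, β, γ ∈ ℝ with sin β ≠ 0, and suppose q, q_N : [−l/2, l/2] → ℝ satisfy sin β·q_N(s) + cos β·q'(s) + γ·q(s) = f(s). Define ρ(k) = ∫_{−l/2}^{l/2} exp((k+λ/k)s)·[(i/2)q_N(s) + (1/2)q'(s) + (λ/k)q(s)] ds. Then for all k ∈ ℂ \ {0}: ρ(k) = i·[H(k)·Y(k) + F(k) + C(k)], where H(k) = k e^{iβ} + λ/(k e^{iβ}) − γ, Y(k) = (1/(2 sin β))∫_{−l/2}^{l/2} exp((k+λ/k)s)·q(s)ds, F(k) = (1/(2 sin β))∫_{−l/2}^{l/2} exp((k+λ/k)s)·f(s)ds, and C(k) = (e^{iβ}/(2 sin β))·[e(−k)q(−l/2) − e(k)q(l/2)] with e(k) = exp((k+λ/k)l/2). -/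

import Mathlib

open MeasureTheory Set

theorem stmt_18 (lam l β γ : ℝ) (hl : 0 < l) (hβ : Real.sin β ≠ 0)
    (f q qN : ℝ → ℝ)
    (hf : ContDiffOn ℝ 1 f (Set.Icc (-l/2) (l/2)))
    (hq : ContDiffOn ℝ 1 q (Set.Icc (-l/2) (l/2)))
    (hbc : ∀ s ∈ Set.Icc (-l/2) (l/2),
      Real.sin β * qN s + Real.cos β * deriv q s + γ * q s = f s)
    (ρ H Y F C e : ℂ → ℂ)
    (hρ : ∀ k : ℂ, k ≠ 0 → ρ k = ∫ s in (-l/2)..(l/2),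
      Complex.exp ((k + (lam : ℂ) / k) * s) *
        ((Complex.I / 2) * (qN s : ℂ) + (1 / 2) * ((deriv q s : ℝ) : ℂ)
          + ((lam : ℂ) / k) * (q s : ℂ)))
    (hH : ∀ k : ℂ, k ≠ 0 → H k = k * Complex.exp (Complex.I * β)
      + (lam : ℂ) / (k * Complex.exp (Complex.I * β)) - γ)
    (hY : ∀ k : ℂ, k ≠ 0 → Y k = (1 / (2 * (Real.sin β : ℂ))) *
      ∫ s in (-l/2)..(l/2), Complex.exp ((k + (lam : ℂ) / k) * s) * (q s : ℂ))
    (hF : ∀ k : ℂ, k ≠ 0 → F k = (1 / (2 * (Real.sin β : ℂ))) *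
      ∫ s in (-l/2)..(l/2), Complex.exp ((k + (lam : ℂ) / k) * s) * (f s : ℂ))
    (he : ∀ k : ℂ, k ≠ 0 → e k = Complex.exp ((k + (lam : ℂ) / k) * l / 2))
    (hC : ∀ k : ℂ, k ≠ 0 → C k = (Complex.exp (Complex.I * β) / (2 * (Real.sin β : ℂ))) *
      (e (-k) * (q (-l/2) : ℂ) - e k * (q (l/2) : ℂ))) :
    ∀ k : ℂ, k ≠ 0 → ρ k = Complex.I * (H k * Y k + F k + C k) := by
  intro k hk
  have hab : (-l/2 : ℝ) ≤ l/2 := by linarith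
  have hab' : (-l/2 : ℝ) < l/2 := by linarith
  set a : ℝ := -l/2 with ha
  set b : ℝ := l/2 with hbdef
  set S : ℂ := (Real.sin β : ℂ) with hSdef
  have hS : S ≠ 0 := Complex.ofReal_ne_zero.mpr hβ
  have h2S : (2 * S) ≠ 0 := mul_ne_zero two_ne_zero hS
  set cβ : ℂ := (Real.cos β : ℂ) with hcβ
  set μ : ℂ := k + (lam : ℂ) / k with hμ
  set E : ℝ → ℂ := fun s => Complex.exp (μ * s) with hE
  have hEc : Continuous E := Complex.continuous_exp.comp (continuous_const.mul Complex.continuous_ofReal)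
  set q₁ : ℝ → ℝ := derivWithin q (Icc a b) with hq₁
  have hUD : UniqueDiffOn ℝ (Icc a b) := uniqueDiffOn_Icc hab'
  have hq₁c : ContinuousOn q₁ (Icc a b) := hq.continuousOn_derivWithin hUD le_rfl
  have hqc : ContinuousOn q (Icc a b) := hq.continuousOn
  have hfc : ContinuousOn f (Icc a b) := hf.continuousOn
  have hderiv_eq : ∀ s ∈ Ioo a b, deriv q s = q₁ s := fun s hs =>
    (derivWithin_of_mem_nhds (Icc_mem_nhds hs.1 hs.2)).symm
  have hqd : ∀ s ∈ Ioo a b, HasDerivAt q (q₁ s) s := by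
    intro s hs
    have hmem : Icc a b ∈ nhds s := Icc_mem_nhds hs.1 hs.2
    have hda := (hq.differentiableOn one_ne_zero s (Ioo_subset_Icc_self hs)).differentiableAt hmem
    rw [← hderiv_eq s hs]
    exact hda.hasDerivAt
  -- integrability helper
  have hIb : ∀ g : ℝ → ℂ, ContinuousOn g (Icc a b) → IntervalIntegrable g volume a b := by
    intro g hg
    apply ContinuousOn.intervalIntegrable
    rwa [uIcc_of_le hab]
  have hint_q : IntervalIntegrable (fun s => E s * (q s : ℂ)) volume a b :=
    hIb _ (hEc.continuousOn.mul (Complex.continuous_ofReal.comp_continuousOn hqc))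
  have hint_f : IntervalIntegrable (fun s => E s * (f s : ℂ)) volume a b :=
    hIb _ (hEc.continuousOn.mul (Complex.continuous_ofReal.comp_continuousOn hfc))
  have hint_d : IntervalIntegrable (fun s => E s * (q₁ s : ℂ)) volume a b :=
    hIb _ (hEc.continuousOn.mul (Complex.continuous_ofReal.comp_continuousOn hq₁c))
  -- FTC
  have hFTC : ∫ s in a..b, (μ * (E s * (q s : ℂ)) + E s * (q₁ s : ℂ))
      = E b * (q b : ℂ) - E a * (q a : ℂ) := by
    apply intervalIntegral.integral_eq_sub_of_hasDerivAt_of_le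
      (f := fun s => E s * (q s : ℂ))
      (f' := fun s => μ * (E s * (q s : ℂ)) + E s * (q₁ s : ℂ)) hab
    · exact hEc.continuousOn.mul (Complex.continuous_ofReal.comp_continuousOn hqc)
    · intro s hs
      have h1 : HasDerivAt (fun t : ℝ => E t) (μ * E s) s := by
        have h0 : HasDerivAt (fun z : ℂ => Complex.exp (μ * z)) (Complex.exp (μ * (s : ℂ)) * μ) (s : ℂ) := by
          simpa [Function.comp_def] using
            (Complex.hasDerivAt_exp (μ * s)).comp (s : ℂ) ((hasDerivAt_id (s : ℂ)).const_mul μ)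
        have := h0.comp_ofReal
        rw [mul_comm] at this
        exact this
      have h2 : HasDerivAt (fun t : ℝ => ((q t : ℝ) : ℂ)) ((q₁ s : ℝ) : ℂ) s :=
        (hqd s hs).ofReal_comp
      have := h1.mul h2
      exact this.congr_deriv (by ring)
    · exact ((hint_q.const_mul μ).add hint_d)
  have hJd : ∫ s in a..b, E s * (q₁ s : ℂ)
      = (E b * (q b : ℂ) - E a * (q a : ℂ)) - μ * ∫ s in a..b, E s * (q s : ℂ) := by
    have := hFTC
    rw [intervalIntegral.integral_add (hint_q.const_mul μ) hint_d,
      intervalIntegral.integral_const_mul] at this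
    linear_combination this
  -- coefficients
  set cf : ℂ := Complex.I / (2 * S) with hcf
  set cd : ℂ := (1 : ℂ) / 2 - Complex.I * cβ / (2 * S) with hcd
  set cq : ℂ := (lam : ℂ) / k - Complex.I * (γ : ℂ) / (2 * S) with hcq
  -- rewrite ρ
  have haeb : ∀ᵐ s : ℝ, s ≠ b := by
    have h0 : (volume : Measure ℝ) {b} = 0 := measure_singleton b
    simpa [MeasureTheory.ae_iff] using h0
  have hρ2 : ρ k = ∫ s in a..b,
      (cf * (E s * (f s : ℂ)) + (cd * (E s * (q₁ s : ℂ)) + cq * (E s * (q s : ℂ)))) := by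
    rw [hρ k hk]
    apply intervalIntegral.integral_congr_ae
    filter_upwards [haeb] with s hsb hs
    rw [uIoc_of_le hab] at hs
    have hs' : s ∈ Ioo a b := ⟨hs.1, lt_of_le_of_ne hs.2 hsb⟩
    have hbc' := hbc s (Ioo_subset_Icc_self hs')
    rw [hderiv_eq s hs'] at hbc'
    have hqN : (qN s : ℂ) = ((f s : ℂ) - cβ * (q₁ s : ℂ) - (γ : ℂ) * (q s : ℂ)) / S := by
      rw [hSdef, hcβ]
      have : qN s = (f s - Real.cos β * q₁ s - γ * q s) / Real.sin β := by
        field_simp [hS, hk]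
        linarith
      rw [this]
      push_cast
      ring
    rw [hderiv_eq s hs']
    have hfactor : (Complex.I / 2 * (qN s : ℂ) + 1 / 2 * (q₁ s : ℂ) + (lam : ℂ) / k * (q s : ℂ))
        = cf * (f s : ℂ) + (cd * (q₁ s : ℂ) + cq * (q s : ℂ)) := by
      rw [hqN, hcf, hcd, hcq]
      field_simp [h2S, hk]
      ring
    have hEs : E s = Complex.exp ((k + (lam : ℂ) / k) * s) := rfl
    rw [← hEs, hfactor]
    ring
  have hsplit : ρ k = cf * (∫ s in a..b, E s * (f s : ℂ))
      + (cd * (∫ s in a..b, E s * (q₁ s : ℂ)) + cq * (∫ s in a..b, E s * (q s : ℂ))) := by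
    rw [hρ2, intervalIntegral.integral_add (hint_f.const_mul cf)
        ((hint_d.const_mul cd).add (hint_q.const_mul cq)),
      intervalIntegral.integral_add (hint_d.const_mul cd) (hint_q.const_mul cq),
      intervalIntegral.integral_const_mul, intervalIntegral.integral_const_mul,
      intervalIntegral.integral_const_mul]
  -- trig
  have hexp : Complex.exp (Complex.I * (β : ℂ)) = cβ + S * Complex.I := by
    rw [mul_comm, Complex.exp_mul_I, hSdef, hcβ]
    push_cast
    ring
  have hEcis_ne : cβ + S * Complex.I ≠ 0 := by
    rw [← hexp]; exact Complex.exp_ne_zero _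
  have pyth : S ^ 2 + cβ ^ 2 = 1 := by
    rw [hSdef, hcβ]
    exact_mod_cast congrArg (fun x : ℝ => (x : ℂ)) (Real.sin_sq_add_cos_sq β)
  have lem1 : cd = -Complex.I * (cβ + S * Complex.I) / (2 * S) := by
    rw [hcd]
    field_simp [h2S]
    linear_combination S * Complex.I_sq
  have lem2 : cq - cd * μ = Complex.I * (k * (cβ + S * Complex.I)
      + (lam : ℂ) / (k * (cβ + S * Complex.I)) - (γ : ℂ)) / (2 * S) := by
    have hXinv : (cβ + S * Complex.I)⁻¹ = cβ - S * Complex.I :=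
      inv_eq_of_mul_eq_one_right (by linear_combination pyth - S^2 * Complex.I_sq)
    rw [hcq, lem1, hμ, div_mul_eq_div_div (lam : ℂ) k (cβ + S * Complex.I),
      div_eq_mul_inv ((lam : ℂ) / k) (cβ + S * Complex.I), hXinv]
    field_simp [hS, h2S, hk]
    linear_combination (2 * (lam:ℂ) * S) * Complex.I_sq
  -- exponent identities
  have hEb : Complex.exp ((k + (lam : ℂ) / k) * (l : ℂ) / 2) = E b := by
    rw [hE]; congr 1
    rw [hbdef]; push_cast; ring
  have hEa : Complex.exp ((-k + (lam : ℂ) / (-k)) * (l : ℂ) / 2) = E a := by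
    rw [hE]; congr 1
    rw [ha, hμ]; push_cast
    rw [div_neg]
    ring
  -- assemble
  rw [hsplit, hJd, hH k hk, hY k hk, hF k hk, hC k hk, he k hk, he (-k) (neg_ne_zero.2 hk)]
  rw [hexp] at *
  rw [hEb, hEa]
  rw [← hμ]
  linear_combination (E b * (q b : ℂ) - E a * (q a : ℂ)) * lem1
    + (∫ s in a..b, E s * (q s : ℂ)) * lem2
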